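/- Let p ∈ (0,1], q > 0, d ∈ ℕ, x ∈ ℝ^d (a row of the design matrix) and β ∈ ℝ^d. Let r_1,…,r_d be independent random variables, each taking value 0 with probability 1-p and value 1/p with probability p, and define the perturbed row x̃ by x̃_j = x_j·(1 + |x_j|^{(q-2)/2}·(r_j - 1)) for each j. Then the variance of the perturbed linear predictor satisfies Var[∑_{j=1}^d x̃_j β_j] = ∑_{j=1}^d ((1-p)/p)·|x_j|^q·β_j^2. -/

import Mathlib

open MeasureTheory ProbabilityTheory

/-- Integral against the two-point measure. -/
lemma integral_two_point (p : ℝ) (hp0 : 0 < p) (hp1 : p ≤ 1) (f : ℝ → ℝ) :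
    ∫ t, f t ∂(ENNReal.ofReal (1 - p) • Measure.dirac (0 : ℝ)
        + ENNReal.ofReal p • Measure.dirac (1 / p))
      = (1 - p) * f 0 + p * f (1 / p) := by
  have h0 : Integrable f (Measure.dirac (0 : ℝ)) := by
    refine (integrable_const (f 0)).congr ?_
    rw [Filter.EventuallyEq, MeasureTheory.ae_dirac_eq]
    exact Filter.eventually_pure.2 rfl
  have h1 : Integrable f (Measure.dirac (1 / p : ℝ)) := by
    refine (integrable_const (f (1 / p))).congr ?_
    rw [Filter.EventuallyEq, MeasureTheory.ae_dirac_eq]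
    exact Filter.eventually_pure.2 rfl
  rw [integral_add_measure (h0.smul_measure ENNReal.ofReal_ne_top)
      (h1.smul_measure ENNReal.ofReal_ne_top),
    integral_smul_measure, integral_smul_measure, integral_dirac, integral_dirac,
    ENNReal.toReal_ofReal (by linarith), ENNReal.toReal_ofReal hp0.le]
  simp [smul_eq_mul]

lemma variance_const_add {Ω : Type*} [MeasurableSpace Ω] (μ : Measure Ω)
    [IsProbabilityMeasure μ] (c : ℝ) (Y : Ω → ℝ) (hY : Integrable Y μ) :
    variance (fun ω => c + Y ω) μ = variance Y μ := by
  have h : (∫ ω, (c + Y ω) ∂μ) = c + ∫ ω, Y ω ∂μ := by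
    rw [integral_add (integrable_const c) hY]; simp
  simp only [variance, evariance, h]
  congr 1
  refine lintegral_congr fun ω => ?_
  congr 2
  ring

/-- **Variance of the Sparseout-perturbed linear predictor of a GLM.**
Let `p ∈ (0,1]`, `q > 0`, `x β : ℝ^d`, and let `r j` be independent random
masks each taking value `0` with probability `1-p` and `1/p` with
probability `p`.  With the Sparseout perturbation
`x̃ j = x j · (1 + |x j|^((q-2)/2) · (r j - 1))`, the variance of the
perturbed linear predictor `∑ j, x̃ j · β j` equals
`∑ j, ((1-p)/p) · |x j|^q · (β j)^2`. -/
theorem sparseout_glm_variance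
    {Ω : Type*} [MeasurableSpace Ω] (μ : Measure Ω) [IsProbabilityMeasure μ]
    (p q : ℝ) (hp0 : 0 < p) (hp1 : p ≤ 1) (hq : 0 < q)
    (d : ℕ) (x β : Fin d → ℝ) (r : Fin d → Ω → ℝ)
    (hmeas : ∀ j, Measurable (r j))
    (hindep : iIndepFun r μ)
    (hdist : ∀ j, μ.map (r j)
      = ENNReal.ofReal (1 - p) • Measure.dirac (0 : ℝ)
        + ENNReal.ofReal p • Measure.dirac (1 / p)) :
    variance (fun ω => ∑ j, x j * (1 + |x j| ^ ((q - 2) / 2) * (r j ω - 1)) * β j) μ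
      = ∑ j, ((1 - p) / p) * |x j| ^ q * (β j) ^ 2 := by
  set e : ℝ := (q - 2) / 2 with he
  set a : Fin d → ℝ := fun j => x j * |x j| ^ e * β j with ha
  set c : Fin d → ℝ := fun j => x j * β j - a j with hc
  -- `r j` is a.e. bounded, hence in L²
  have hbound : ∀ j, ∀ᵐ ω ∂μ, ‖r j ω‖ ≤ 1 / p := by
    intro j
    have hS : MeasurableSet ({0, 1 / p} : Set ℝ) :=
      (measurableSet_singleton _).insert 0
    have h0 : μ (r j ⁻¹' ({0, 1 / p} : Set ℝ)ᶜ) = 0 := by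
      rw [← Measure.map_apply (hmeas j) hS.compl, hdist j]
      simp [Measure.dirac_apply' _ hS.compl, Set.indicator,
        one_div, (by positivity : (0:ℝ) < p⁻¹).ne']
    have hmem : ∀ᵐ ω ∂μ, r j ω ∈ ({0, 1 / p} : Set ℝ) := by
      rw [ae_iff]
      convert h0 using 2
      rfl
    filter_upwards [hmem] with ω hω
    rcases hω with h | h
    · rw [Real.norm_eq_abs, h, abs_zero]; positivity
    · rw [Set.mem_singleton_iff] at h
      rw [Real.norm_eq_abs, h, abs_of_nonneg (by positivity)]
  have hr2 : ∀ j, MemLp (r j) 2 μ := fun j =>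
    MemLp.of_bound (hmeas j).aestronglyMeasurable (1 / p) (hbound j)
  -- mean and second moment of `r j`
  have hmean : ∀ j, (∫ ω, r j ω ∂μ) = 1 := by
    intro j
    have := integral_map (μ := μ) (f := fun t : ℝ => t) (hmeas j).aemeasurable
      aestronglyMeasurable_id
    rw [← this, hdist j, integral_two_point p hp0 hp1]
    field_simp
    ring
  have hsq : ∀ j, (∫ ω, (r j ω) ^ 2 ∂μ) = 1 / p := by
    intro j
    have := integral_map (μ := μ) (f := fun t : ℝ => t ^ 2) (hmeas j).aemeasurable
      (measurable_id.pow_const 2).aestronglyMeasurable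
    rw [← this, hdist j, integral_two_point p hp0 hp1]
    rw [one_div, inv_pow]
    field_simp
    ring
  have hvarr : ∀ j, variance (r j) μ = (1 - p) / p := by
    intro j
    rw [variance_eq_sub (hr2 j)]
    simp only [Pi.pow_apply]
    rw [hsq j]
    have : (∫ ω, (r j) ω ∂μ) = 1 := hmean j
    rw [this]
    field_simp
  -- rewrite the predictor as a sum of independent variables
  have hfun : (fun ω => ∑ j, x j * (1 + |x j| ^ e * (r j ω - 1)) * β j)
      = ∑ j, (fun ω => c j + a j * r j ω) := by
    funext ω
    rw [Finset.sum_apply]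
    refine Finset.sum_congr rfl fun j _ => ?_
    simp only [hc, ha]
    ring
  have hX2 : ∀ j : Fin d, MemLp (fun ω => c j + a j * r j ω) 2 μ := fun j =>
    (memLp_const (c j)).add ((hr2 j).const_mul (a j))
  have hpair : Set.Pairwise ↑(Finset.univ : Finset (Fin d))
      fun i j => IndepFun (fun ω => c i + a i * r i ω) (fun ω => c j + a j * r j ω) μ := by
    intro i _ j _ hij
    exact (hindep.indepFun hij).comp
      (measurable_const.add (measurable_id.const_mul (a i)))
      (measurable_const.add (measurable_id.const_mul (a j)))
  rw [hfun, IndepFun.variance_sum (fun j _ => hX2 j) hpair]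
  refine Finset.sum_congr rfl fun j _ => ?_
  rw [variance_const_add μ (c j) _ (((hr2 j).const_mul (a j)).integrable one_le_two),
    variance_const_mul, hvarr j]
  rcases eq_or_ne (x j) 0 with hx | hx
  · simp [ha, hx, Real.zero_rpow hq.ne']
  · have hxpos : 0 < |x j| := abs_pos.2 hx
    have h1 : (|x j| ^ e) ^ 2 = |x j| ^ (q - 2 : ℝ) := by
      rw [← Real.rpow_natCast (|x j| ^ e) 2, ← Real.rpow_mul (abs_nonneg _)]
      norm_num [he]
    have h2 : |x j| ^ (2 : ℕ) * |x j| ^ (q - 2 : ℝ) = |x j| ^ q := by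
      rw [← Real.rpow_natCast (|x j|) 2, ← Real.rpow_add hxpos]
      norm_num
    have : (a j) ^ 2 = |x j| ^ q * (β j) ^ 2 := by
      show (x j * |x j| ^ e * β j) ^ 2 = _
      rw [mul_pow, mul_pow, h1, ← sq_abs (x j), ← h2]
    rw [this]
    ring
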